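/- Let 0 ≤ α < 1 and 0 < r < 1. If |aₙ| ≤ (2n+1)(n+1)/6 and |bₙ| ≤ (2n-1)(n-1)/6 for all n ≥ 2 (with b₁ = 0), and 2(1-α)(1-r)⁴ + α(1-r)² - (1+r)² ≥ 0, then ∑_{n≥2} ((n-α)/(1-α))|aₙ| r^{n-1} + ∑_{n≥2} ((n+α)/(1-α))|bₙ| r^{n-1} ≤ 1. -/

import Mathlib

private lemma choose3_cast (n : ℕ) :
    (((n + 3).choose 3 : ℕ) : ℝ) = ((n : ℝ) + 1) * ((n : ℝ) + 2) * ((n : ℝ) + 3) / 6 := by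
  have h : 6 * (n + 3).choose 3 = (n + 1) * (n + 2) * (n + 3) := by
    have e1 := Nat.add_one_mul_choose_eq (n + 2) 2
    have e2 := Nat.add_one_mul_choose_eq (n + 1) 1
    simp only [Nat.succ_eq_add_one, Nat.choose_one_right] at e1 e2
    calc 6 * (n + 3).choose 3 = 2 * ((n + 3).choose 3 * 3) := by ring
      _ = 2 * ((n + 2 + 1) * (n + 2).choose 2) := by rw [e1]
      _ = (n + 2 + 1) * ((n + 2).choose 2 * 2) := by ring
      _ = (n + 2 + 1) * ((n + 1 + 1) * (n + 1)) := by rw [e2]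
      _ = (n + 1) * (n + 2) * (n + 3) := by ring
  have := congrArg (fun k : ℕ => (k : ℝ)) h
  push_cast at this
  linarith

theorem stmt_11 (α : ℝ) (hα0 : 0 ≤ α) (hα1 : α < 1) (r : ℝ) (h0 : 0 < r) (h1 : r < 1)
    (a b : ℕ → ℂ) (hb1 : b 1 = 0)
    (ha : ∀ n : ℕ, 2 ≤ n → ‖a n‖ ≤ (2 * n + 1) * (n + 1) / 6)
    (hb : ∀ n : ℕ, 2 ≤ n → ‖b n‖ ≤ (2 * n - 1) * (n - 1) / 6)
    (hpoly : 0 ≤ 2 * (1 - α) * (1 - r) ^ 4 + α * (1 - r) ^ 2 - (1 + r) ^ 2) :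
    (∑' n : ℕ, (((n + 2 : ℝ) - α) / (1 - α)) * ‖a (n + 2)‖ * r ^ (n + 1))
      + (∑' n : ℕ, (((n + 2 : ℝ) + α) / (1 - α)) * ‖b (n + 2)‖ * r ^ (n + 1)) ≤ 1 := by
  have hβ : 0 < 1 - α := by linarith
  have hρ : 0 < 1 - r := by linarith
  have hr' : ‖r‖ < 1 := by rwa [Real.norm_eq_abs, abs_of_pos h0]
  -- building-block series
  have h3 : HasSum (fun n : ℕ => (((n + 3).choose 3 : ℕ) : ℝ) * r ^ n) (1 / (1 - r) ^ 4) :=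
    hasSum_choose_mul_geometric_of_norm_lt_one 3 hr'
  have hA : HasSum (fun n : ℕ => (((n + 1).choose 1 : ℕ) : ℝ) * r ^ n) (1 / (1 - r) ^ 2) :=
    hasSum_choose_mul_geometric_of_norm_lt_one 1 hr'
  have h1s : HasSum (fun n : ℕ => ((n : ℝ) + 1) * r ^ n) (1 / (1 - r) ^ 2) := by
    convert hA using 2 with n
    simp
  have h0s : HasSum (fun n : ℕ => r ^ n) (1 / (1 - r)) := by
    simpa [one_div] using hasSum_geometric_of_lt_one h0.le h1
  -- majorant sequences
  set Ba : ℕ → ℝ := fun n =>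
    (((n : ℝ) + 2 - α) / (1 - α)) * ((2 * ((n : ℝ) + 2) + 1) * (((n : ℝ) + 2) + 1) / 6)
      * r ^ (n + 1) with hBadef
  set Bb : ℕ → ℝ := fun n =>
    (((n : ℝ) + 2 + α) / (1 - α)) * ((2 * ((n : ℝ) + 2) - 1) * (((n : ℝ) + 2) - 1) / 6)
      * r ^ (n + 1) with hBbdef
  set S : ℝ := r * (4 / (1 - α) * (1 / (1 - r) ^ 4) + 1 / (1 - r) ^ 2 + 1 / (1 - r)) with hSdef
  have hsum : HasSum (fun n => Ba n + Bb n) S := by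
    have H := (((h3.mul_left (4 / (1 - α))).add h1s).add h0s).mul_left r
    convert H using 1
    · rfl
    · funext n
      rw [choose3_cast n]
      simp only [hBadef, hBbdef]
      have : r ^ (n + 1) = r * r ^ n := by ring
      rw [this]
      field_simp
      ring

  have hBa_nonneg : ∀ n, 0 ≤ Ba n := by
    intro n
    have : (0:ℝ) ≤ (n : ℝ) := Nat.cast_nonneg n
    apply mul_nonneg (mul_nonneg (div_nonneg (by linarith) hβ.le) (by positivity)) (by positivity)
  have hBb_nonneg : ∀ n, 0 ≤ Bb n := by
    intro n
    have : (0:ℝ) ≤ (n : ℝ) := Nat.cast_nonneg n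
    apply mul_nonneg (mul_nonneg (div_nonneg (by linarith) hβ.le) ?_) (by positivity)
    apply div_nonneg (mul_nonneg (by linarith) (by linarith)) (by norm_num)
  have hBaS : Summable Ba :=
    Summable.of_nonneg_of_le hBa_nonneg (fun n => le_add_of_nonneg_right (hBb_nonneg n))
      hsum.summable
  have hBbS : Summable Bb :=
    Summable.of_nonneg_of_le hBb_nonneg (fun n => le_add_of_nonneg_left (hBa_nonneg n))
      hsum.summable
  -- termwise bounds
  have hfa : ∀ n : ℕ, (((n : ℝ) + 2 - α) / (1 - α)) * ‖a (n + 2)‖ * r ^ (n + 1) ≤ Ba n := by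
    intro n
    have hc : 0 ≤ ((n : ℝ) + 2 - α) / (1 - α) := by
      apply div_nonneg _ hβ.le
      have : (0:ℝ) ≤ (n : ℝ) := Nat.cast_nonneg n
      linarith
    have hn := ha (n + 2) (by omega)
    push_cast at hn
    apply mul_le_mul_of_nonneg_right _ (by positivity)
    exact mul_le_mul_of_nonneg_left hn hc
  have hfb : ∀ n : ℕ, (((n : ℝ) + 2 + α) / (1 - α)) * ‖b (n + 2)‖ * r ^ (n + 1) ≤ Bb n := by
    intro n
    have hc : 0 ≤ ((n : ℝ) + 2 + α) / (1 - α) := by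
      apply div_nonneg _ hβ.le
      have : (0:ℝ) ≤ (n : ℝ) := Nat.cast_nonneg n
      linarith
    have hn := hb (n + 2) (by omega)
    push_cast at hn
    apply mul_le_mul_of_nonneg_right _ (by positivity)
    exact mul_le_mul_of_nonneg_left hn hc
  have hfa_nonneg : ∀ n : ℕ,
      0 ≤ (((n : ℝ) + 2 - α) / (1 - α)) * ‖a (n + 2)‖ * r ^ (n + 1) := by
    intro n
    have : (0:ℝ) ≤ (n : ℝ) := Nat.cast_nonneg n
    apply mul_nonneg (mul_nonneg (div_nonneg (by linarith) hβ.le) (norm_nonneg _)) (by positivity)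
  have hfb_nonneg : ∀ n : ℕ,
      0 ≤ (((n : ℝ) + 2 + α) / (1 - α)) * ‖b (n + 2)‖ * r ^ (n + 1) := by
    intro n
    have : (0:ℝ) ≤ (n : ℝ) := Nat.cast_nonneg n
    apply mul_nonneg (mul_nonneg (div_nonneg (by linarith) hβ.le) (norm_nonneg _)) (by positivity)
  have hfaS : Summable (fun n : ℕ => (((n : ℝ) + 2 - α) / (1 - α)) * ‖a (n + 2)‖ * r ^ (n + 1)) :=
    Summable.of_nonneg_of_le hfa_nonneg hfa hBaS
  have hfbS : Summable (fun n : ℕ => (((n : ℝ) + 2 + α) / (1 - α)) * ‖b (n + 2)‖ * r ^ (n + 1)) :=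
    Summable.of_nonneg_of_le hfb_nonneg hfb hBbS
  have step1 : (∑' n : ℕ, (((n : ℝ) + 2 - α) / (1 - α)) * ‖a (n + 2)‖ * r ^ (n + 1)) ≤ ∑' n, Ba n :=
    Summable.tsum_le_tsum hfa hfaS hBaS
  have step2 : (∑' n : ℕ, (((n : ℝ) + 2 + α) / (1 - α)) * ‖b (n + 2)‖ * r ^ (n + 1)) ≤ ∑' n, Bb n :=
    Summable.tsum_le_tsum hfb hfbS hBbS
  have step3 : (∑' n, Ba n) + (∑' n, Bb n) = S := by
    rw [← Summable.tsum_add hBaS hBbS]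
    exact hsum.tsum_eq
  have hS1 : S ≤ 1 := by
    have key : r * (4 + (1 - α) * (1 - r) ^ 2 + (1 - α) * (1 - r) ^ 3) ≤ (1 - α) * (1 - r) ^ 4 := by
      nlinarith [hpoly]
    have hSeq : S = (r * (4 + (1 - α) * (1 - r) ^ 2 + (1 - α) * (1 - r) ^ 3))
        / ((1 - α) * (1 - r) ^ 4) := by
      rw [hSdef]
      field_simp
    rw [hSeq, div_le_one (by positivity)]
    exact key
  linarith
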